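/- For every integer m ≥ 0 there exists a constant β_m > 0 such that for all integers n ≥ 0, φ²_{n,m} ≤ β_m · (n+1)^{-5/2} · (27/2)^n. -/

import Mathlib

/-- The number of rooted type II triangulations of a disc with m+2 boundary
vertices and n internal vertices. -/
noncomputable def phi2 (n m : ℕ) : ℝ :=
  (2 ^ (n + 1) * Nat.factorial (2 * m + 1) * Nat.factorial (2 * m + 3 * n) : ℝ) /
    ((Nat.factorial m) ^ 2 * Nat.factorial n * Nat.factorial (2 * m + 2 * n + 2))

lemma sqrt_step (x : ℝ) (hx : 0 ≤ x) :
    ((3*x+1)*(3*x+2)*(3*x+3)) * Real.sqrt (x+2) ≤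
      ((27/4) * ((x+1)*(2*x+1)*(2*x+2))) * Real.sqrt (x+1) := by
  have ha : (0:ℝ) ≤ (3*x+1)*(3*x+2)*(3*x+3) := by positivity
  have hb : (0:ℝ) ≤ (27/4) * ((x+1)*(2*x+1)*(2*x+2)) := by positivity
  have key : ((3*x+1)*(3*x+2)*(3*x+3))^2*(x+2) ≤ ((27/4) * ((x+1)*(2*x+1)*(2*x+2)))^2*(x+1) := by
    nlinarith [pow_nonneg hx 5, pow_nonneg hx 4, pow_nonneg hx 3, pow_nonneg hx 2, hx]
  calc ((3*x+1)*(3*x+2)*(3*x+3)) * Real.sqrt (x+2)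
      = Real.sqrt (((3*x+1)*(3*x+2)*(3*x+3))^2 * (x+2)) := by
        rw [Real.sqrt_mul (sq_nonneg _), Real.sqrt_sq ha]
    _ ≤ Real.sqrt (((27/4) * ((x+1)*(2*x+1)*(2*x+2)))^2 * (x+1)) := Real.sqrt_le_sqrt key
    _ = ((27/4) * ((x+1)*(2*x+1)*(2*x+2))) * Real.sqrt (x+1) := by
        rw [Real.sqrt_mul (sq_nonneg _), Real.sqrt_sq hb]

/-- Lemma A: (3n)! √(n+1) ≤ (27/4)^n n! (2n)! -/
lemma lemA : ∀ n : ℕ, ((3*n).factorial : ℝ) * Real.sqrt ((n:ℝ)+1) ≤ (27/4)^n * (n.factorial) * ((2*n).factorial) := by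
  intro n
  induction n with
  | zero => simp
  | succ n ih =>
    have h3 : 3*(n+1) = 3*n+1+1+1 := by omega
    have h2 : 2*(n+1) = 2*n+1+1 := by omega
    rw [h3, h2, Nat.factorial_succ, Nat.factorial_succ, Nat.factorial_succ,
      Nat.factorial_succ, Nat.factorial_succ, Nat.factorial_succ]
    push_cast
    set x : ℝ := (n : ℝ) with hx_def
    have hx : 0 ≤ x := Nat.cast_nonneg n
    have hs := sqrt_step x hx
    have hF3 : (0:ℝ) ≤ ((3*n).factorial : ℝ) := by positivity
    have hc : (x+1)+1 = x + 2 := by ring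
    have key : ((3*n).factorial : ℝ) * (((3*x+1)*(3*x+2)*(3*x+3)) * Real.sqrt (x+2))
        ≤ (27/4)^(n+1) * ((x+1) * (n.factorial:ℝ)) * (((2*x+1)*(2*x+2)) * ((2*n).factorial:ℝ)) := by
      calc ((3*n).factorial : ℝ) * (((3*x+1)*(3*x+2)*(3*x+3)) * Real.sqrt (x+2))
          ≤ ((3*n).factorial : ℝ) * (((27/4) * ((x+1)*(2*x+1)*(2*x+2))) * Real.sqrt (x+1)) :=
            mul_le_mul_of_nonneg_left hs hF3
        _ = ((27/4) * ((x+1)*(2*x+1)*(2*x+2))) * (((3*n).factorial : ℝ) * Real.sqrt (x+1)) := by ring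
        _ ≤ ((27/4) * ((x+1)*(2*x+1)*(2*x+2))) * ((27/4)^n * (n.factorial) * ((2*n).factorial)) := by
            apply mul_le_mul_of_nonneg_left ih (by positivity)
        _ = (27/4)^(n+1) * ((x+1) * (n.factorial:ℝ)) * (((2*x+1)*(2*x+2)) * ((2*n).factorial:ℝ)) := by
            ring
    rw [hc]
    linarith [key]

/-- Lemma B: (3n+k)! (2n)! ≤ (3/2)^k (2n+k)! (3n)! -/
lemma lemB (n : ℕ) : ∀ k : ℕ, ((3*n+k).factorial : ℝ) * ((2*n).factorial) ≤ (3/2)^k * ((2*n+k).factorial) * ((3*n).factorial) := by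
  intro k
  induction k with
  | zero => simp [mul_comm]
  | succ k ih =>
    rw [← Nat.add_assoc, ← Nat.add_assoc, Nat.factorial_succ, Nat.factorial_succ]
    push_cast
    have hkey : 3*(n:ℝ)+(k:ℝ) + 1 ≤ (3/2) * (2*(n:ℝ)+(k:ℝ) + 1) := by
      have : (0:ℝ) ≤ (n:ℝ) := Nat.cast_nonneg n
      linarith
    have key : (3*(n:ℝ)+(k:ℝ)+1) * (((3*n+k).factorial : ℝ) * ((2*n).factorial : ℝ))
        ≤ ((3/2) * (2*(n:ℝ)+(k:ℝ)+1)) * ((3/2)^k * ((2*n+k).factorial) * ((3*n).factorial)) :=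
      mul_le_mul hkey ih (by positivity) (by positivity)
    rw [pow_succ]
    linarith [key]

/-- there is β_m > 0 with φ²_{n,m} ≤ β_m (n+1)^{-5/2} (27/2)^n for all n. -/
theorem phi2_upper_bound (m : ℕ) :
    ∃ β : ℝ, 0 < β ∧ ∀ n : ℕ,
      phi2 n m ≤ β * ((n : ℝ) + 1) ^ (-(5 / 2) : ℝ) * (27 / 2 : ℝ) ^ n := by
  refine ⟨((2*m+1).factorial : ℝ) * (3/2)^(2*m), by positivity, fun n => ?_⟩
  have hx : (0:ℝ) ≤ (n:ℝ) := Nat.cast_nonneg n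
  have hm0 : (0:ℝ) ≤ (m:ℝ) := Nat.cast_nonneg m
  have hx1 : (0:ℝ) < (n:ℝ)+1 := by linarith
  have hr : ((n:ℝ)+1) ^ (-(5/2):ℝ) = (((n:ℝ)+1)^2 * Real.sqrt ((n:ℝ)+1))⁻¹ := by
    rw [Real.rpow_neg hx1.le]
    congr 1
    rw [show (5/2:ℝ) = (2:ℝ) + (1/2:ℝ) by norm_num, Real.rpow_add hx1, Real.rpow_two,
      Real.sqrt_eq_rpow]
  rw [show (27/2:ℝ)^n = 2^n * (27/4:ℝ)^n from by rw [← mul_pow]; norm_num,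
    hr, show (((2*m+1).factorial : ℝ) * (3/2)^(2*m)) * (((n:ℝ)+1)^2 * Real.sqrt ((n:ℝ)+1))⁻¹ * (2^n * (27/4:ℝ)^n)
      = (((2*m+1).factorial : ℝ) * (3/2)^(2*m) * (2^n * (27/4:ℝ)^n)) / (((n:ℝ)+1)^2 * Real.sqrt ((n:ℝ)+1)) from by ring]
  have hB : (0:ℝ) < ((m.factorial:ℝ))^2 * (n.factorial) * ((2*m+2*n+2).factorial) := by positivity
  have hD : (0:ℝ) < ((n:ℝ)+1)^2 * Real.sqrt ((n:ℝ)+1) := by positivity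
  rw [phi2, div_le_div_iff₀ hB hD]
  have hE : (0:ℝ) < ((2*n).factorial:ℝ) * ((3*n).factorial:ℝ) := by positivity
  rw [← mul_le_mul_iff_of_pos_right hE]
  have hA := lemA n
  have hB2 := lemB n (2*m)
  rw [show 3*n+2*m = 2*m+3*n from by omega, show 2*n+2*m = 2*m+2*n from by omega] at hB2
  have hC2 : 2*((n:ℝ)+1)^2 ≤ ((2*m+2*n+2:ℕ):ℝ) * ((2*m+2*n+1:ℕ):ℝ) := by
    push_cast
    nlinarith [mul_nonneg hm0 hx, sq_nonneg (m:ℝ)]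
  have hCfac : ((2*m+2*n+2).factorial:ℝ) = ((2*m+2*n+2:ℕ):ℝ)*((2*m+2*n+1:ℕ):ℝ)*((2*m+2*n).factorial:ℝ) := by
    rw [show 2*m+2*n+2 = (2*m+2*n+1)+1 from by omega, Nat.factorial_succ, Nat.factorial_succ]
    push_cast
    ring
  have hm1 : (1:ℝ) ≤ ((m.factorial:ℝ))^2 := by
    have h1 : (1:ℝ) ≤ (m.factorial:ℝ) := by exact_mod_cast Nat.factorial_pos m
    nlinarith
  have key : ((2:ℝ)^(n+1) * ((2*m+1).factorial:ℝ) * ((2*m+3*n).factorial:ℝ))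
        * (((n:ℝ)+1)^2 * Real.sqrt ((n:ℝ)+1)) * (((2*n).factorial:ℝ) * ((3*n).factorial:ℝ))
      ≤ (((2*m+1).factorial:ℝ) * (3/2)^(2*m) * (2^n * (27/4:ℝ)^n))
        * (((m.factorial:ℝ))^2 * (n.factorial) * ((2*m+2*n+2).factorial))
        * (((2*n).factorial:ℝ) * ((3*n).factorial:ℝ)) := by
    calc ((2:ℝ)^(n+1) * ((2*m+1).factorial:ℝ) * ((2*m+3*n).factorial:ℝ))
          * (((n:ℝ)+1)^2 * Real.sqrt ((n:ℝ)+1)) * (((2*n).factorial:ℝ) * ((3*n).factorial:ℝ))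
        = ((2:ℝ)^(n+1) * ((2*m+1).factorial:ℝ) * ((n:ℝ)+1)^2)
            * ((((2*m+3*n).factorial:ℝ) * ((2*n).factorial:ℝ)) * (((3*n).factorial:ℝ) * Real.sqrt ((n:ℝ)+1))) := by
          ring
      _ ≤ ((2:ℝ)^(n+1) * ((2*m+1).factorial:ℝ) * ((n:ℝ)+1)^2)
            * (((3/2)^(2*m) * ((2*m+2*n).factorial:ℝ) * ((3*n).factorial:ℝ))
              * ((27/4)^n * (n.factorial:ℝ) * ((2*n).factorial:ℝ))) := by
          apply mul_le_mul_of_nonneg_left _ (by positivity)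
          exact mul_le_mul hB2 hA (by positivity) (by positivity)
      _ = (((2*m+1).factorial:ℝ) * (3/2)^(2*m) * (2^n * (27/4:ℝ)^n))
            * ((n.factorial:ℝ) * ((2*m+2*n).factorial:ℝ)) * (2*((n:ℝ)+1)^2)
            * (((2*n).factorial:ℝ) * ((3*n).factorial:ℝ)) := by
          ring
      _ ≤ (((2*m+1).factorial:ℝ) * (3/2)^(2*m) * (2^n * (27/4:ℝ)^n))
            * ((n.factorial:ℝ) * ((2*m+2*n).factorial:ℝ)) * (((2*m+2*n+2:ℕ):ℝ) * ((2*m+2*n+1:ℕ):ℝ))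
            * (((2*n).factorial:ℝ) * ((3*n).factorial:ℝ)) := by
          apply mul_le_mul_of_nonneg_right (mul_le_mul_of_nonneg_left hC2 (by positivity)) (by positivity)
      _ = (((2*m+1).factorial:ℝ) * (3/2)^(2*m) * (2^n * (27/4:ℝ)^n))
            * (1 * (n.factorial:ℝ) * ((2*m+2*n+2).factorial:ℝ))
            * (((2*n).factorial:ℝ) * ((3*n).factorial:ℝ)) := by
          rw [hCfac]; ring
      _ ≤ (((2*m+1).factorial:ℝ) * (3/2)^(2*m) * (2^n * (27/4:ℝ)^n))
            * (((m.factorial:ℝ))^2 * (n.factorial:ℝ) * ((2*m+2*n+2).factorial:ℝ))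
            * (((2*n).factorial:ℝ) * ((3*n).factorial:ℝ)) := by
          apply mul_le_mul_of_nonneg_right (mul_le_mul_of_nonneg_left _ (by positivity)) (by positivity)
          apply mul_le_mul_of_nonneg_right (mul_le_mul_of_nonneg_right hm1 (by positivity)) (by positivity)
  linarith [key]
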